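/- arXiv:math-ph/0309028 — 2 statements merged into one kernel-verified Lean document; each statement's English description precedes it below -/
import Mathlib

section
/- Suppose h is measurable on (0,b), b < ∞, and there is a constant c > 0 such that |h(y)| ≤ c∫_{2y}^b |h(x)| dx + c∫_y^b |h(x)| dx for all y ∈ (0,b). Then h = 0 a.e. on (0,b). -/
open MeasureTheory Set

/-- If `h` is integrable on `(0,b)`, `b < ∞`, and there is `c > 0` with
`|h(y)| ≤ c ∫_{2y}^b |h| + c ∫_y^b |h|` for all `y ∈ (0,b)`, then `h = 0` a.e. on `(0,b)`. -/
theorem stmt_3 (b c : ℝ) (hb : 0 < b) (hc : 0 < c) (h : ℝ → ℝ)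
    (hint : IntegrableOn h (Set.Ioo 0 b))
    (hineq : ∀ y ∈ Set.Ioo (0:ℝ) b,
      |h y| ≤ c * (∫ x in Set.Ioc (2*y) b, |h x|) + c * (∫ x in Set.Ioc y b, |h x|)) :
    ∀ᵐ y ∂(volume.restrict (Set.Ioo (0:ℝ) b)), h y = 0 := by
  set g : ℝ → ℝ := fun x => |h x| with hgdef
  have hgnn : ∀ x, 0 ≤ g x := fun x => abs_nonneg _
  have hgint : IntegrableOn g (Set.Ioc 0 b) := by
    rw [integrableOn_Ioc_iff_integrableOn_Ioo]
    exact hint.abs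
  set F : ℝ → ℝ := fun y => ∫ x in Set.Ioc y b, g x with hFdef
  have hFnn : ∀ y, 0 ≤ F y := fun y => integral_nonneg (fun x => hgnn x)
  have hsub : ∀ a : ℝ, 0 ≤ a → Set.Ioc a b ⊆ Set.Ioc 0 b := by
    intro a ha
    exact Set.Ioc_subset_Ioc_left ha
  have hFmono : ∀ a t : ℝ, 0 ≤ a → a ≤ t → F t ≤ F a := by
    intro a t ha hat
    apply setIntegral_mono_set (hgint.mono_set (hsub a ha))
    · exact Filter.Eventually.of_forall (fun x => hgnn x)
    · exact HasSubset.Subset.eventuallyLE (Set.Ioc_subset_Ioc_left hat)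
  -- pointwise bound: g t ≤ 2c F t on (0,b)
  have hkey : ∀ t ∈ Set.Ioo (0:ℝ) b, g t ≤ 2 * c * F t := by
    intro t ht
    have h1 := hineq t ht
    have h2 : (∫ x in Set.Ioc (2*t) b, g x) ≤ F t := by
      have : F (2*t) ≤ F t := hFmono t (2*t) ht.1.le (by linarith [ht.1.le])
      exact this
    calc g t ≤ c * (∫ x in Set.Ioc (2*t) b, g x) + c * F t := h1
      _ ≤ c * F t + c * F t := by nlinarith
      _ = 2 * c * F t := by ring
  -- key step: if F a' = 0, a ≤ a', a' - a ≤ 1/(4c), 0 ≤ a, a' ≤ b, then F a = 0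
  have hstep : ∀ a a' : ℝ, 0 ≤ a → a ≤ a' → a' ≤ b → a' - a ≤ 1/(4*c) → F a' = 0 → F a = 0 := by
    intro a a' ha haa' ha'b heps hFa'
    have hint1 : IntegrableOn g (Set.Ioc a a') :=
      hgint.mono_set (Set.Ioc_subset_Ioc (by linarith) ha'b)
    have hint2 : IntegrableOn g (Set.Ioc a' b) := hgint.mono_set (hsub a' (by linarith))
    have hsplit : F a = (∫ x in Set.Ioc a a', g x) + F a' := by
      rw [hFdef]
      simp only
      rw [← setIntegral_union (Set.Ioc_disjoint_Ioc_of_le le_rfl) measurableSet_Ioc hint1 hint2,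
        Set.Ioc_union_Ioc_eq_Ioc haa' ha'b]
    have hbound : (∫ x in Set.Ioc a a', g x) ≤ 2 * c * F a * (a' - a) := by
      rw [integral_Ioc_eq_integral_Ioo]
      have : (∫ x in Set.Ioo a a', g x) ≤ ∫ x in Set.Ioo a a', 2 * c * F a := by
        apply setIntegral_mono_on
        · rw [← integrableOn_Ioc_iff_integrableOn_Ioo]; exact hint1
        · exact integrableOn_const measure_Ioo_lt_top.ne
        · exact measurableSet_Ioo
        · intro x hx
          have hx0b : x ∈ Set.Ioo 0 b := ⟨lt_of_le_of_lt ha hx.1, lt_of_lt_of_le hx.2 ha'b⟩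
          calc g x ≤ 2 * c * F x := hkey x hx0b
            _ ≤ 2 * c * F a := by
                have := hFmono a x ha hx.1.le
                nlinarith
      refine this.trans ?_
      rw [setIntegral_const, Real.volume_real_Ioo_of_le haa',
        smul_eq_mul, mul_comm]
    have hFa : F a ≤ 2 * c * F a * (a' - a) := by
      linarith [hsplit, hbound, hFa']
    have hhalf : 2 * c * (a' - a) ≤ 1/2 := by
      have h4c : (0:ℝ) < 4*c := by positivity
      rw [le_div_iff₀ h4c] at heps
      nlinarith
    have : 2 * c * F a * (a' - a) ≤ (1/2) * F a := by nlinarith [hFnn a]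
    nlinarith [hFnn a]
  -- induction: F (max 0 (b - k/(4c))) = 0
  have hind : ∀ k : ℕ, F (max 0 (b - k * (1/(4*c)))) = 0 := by
    intro k
    induction k with
    | zero =>
        simp only [Nat.cast_zero, zero_mul, sub_zero, max_eq_right hb.le]
        rw [hFdef]
        simp [Set.Ioc_self]
    | succ n ih =>
        set ε := 1/(4*c) with hε
        have hεpos : 0 < ε := by positivity
        push_cast
        apply hstep (max 0 (b - (n+1) * ε)) (max 0 (b - n * ε))
        · exact le_max_left _ _
        · apply max_le_max le_rfl; nlinarith
        · apply max_le hb.le; nlinarith [mul_nonneg (Nat.cast_nonneg (α := ℝ) n) hεpos.le]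
        · have hcast : ((n:ℝ)+1) * ε = n * ε + ε := by ring
          push_cast
          rcases le_total (b - n * ε) 0 with h1 | h1 <;>
            rcases le_total (b - ((n:ℝ)+1) * ε) 0 with h2 | h2 <;>
            simp [max_eq_left, max_eq_right, h1, h2] <;> nlinarith
        · exact_mod_cast ih
  -- conclude F 0 = 0
  obtain ⟨n, hn⟩ := exists_nat_ge (b * (4*c))
  have hF0 : F 0 = 0 := by
    have hle : b - n * (1/(4*c)) ≤ 0 := by
      have h4c : (0:ℝ) < 4*c := by positivity
      have hinv : (4*c) * (1/(4*c)) = 1 := by field_simp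
      nlinarith [mul_le_mul_of_nonneg_right hn (le_of_lt (by positivity : (0:ℝ) < 1/(4*c)))]
    have := hind n
    rwa [max_eq_left hle] at this
  -- g = 0 a.e. on Ioc 0 b
  have hgzero : ∀ᵐ x ∂(volume.restrict (Set.Ioc 0 b)), g x = 0 := by
    have hiff := (integral_eq_zero_iff_of_nonneg_ae
      (Filter.Eventually.of_forall (fun x => hgnn x)) hgint).mp hF0
    filter_upwards [hiff] with x hx using hx
  have hgzero' : ∀ᵐ x ∂(volume.restrict (Set.Ioo 0 b)), g x = 0 :=
    ae_restrict_of_ae_restrict_of_subset Set.Ioo_subset_Ioc_self hgzero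
  filter_upwards [hgzero'] with x hx
  exact abs_eq_zero.mp hx
end

section
/- Let q ∈ L²(0,∞) be real-valued with compact support whose supremum is a > 0, and suppose q does not change sign on some interval (a₁, a] with a₁ < a. Then a = lim_{m→∞} |∫₀^∞ q(r) r^m dr|^{1/m} (limit over positive integers m). -/
open MeasureTheory Filter Set

lemma stmt15_root_tendsto_one {C : ℝ} (hC : 0 < C) :
    Tendsto (fun m : ℕ => C ^ ((1:ℝ) / m)) atTop (nhds 1) := by
  have h1 : Tendsto (fun m : ℕ => Real.log C * (1 / (m:ℝ))) atTop (nhds 0) := by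
    simpa using (tendsto_one_div_atTop_nhds_zero_nat).const_mul (Real.log C)
  have h2 := (Real.continuous_exp.tendsto 0).comp h1
  simp only [Function.comp_def, Real.exp_zero] at h2
  refine h2.congr fun m => ?_
  rw [Real.rpow_def_of_pos hC]

lemma stmt15_root_pow_mul {x C : ℝ} (hx : 0 ≤ x) (hC : 0 ≤ C) {m : ℕ} (hm : m ≠ 0) :
    (x ^ m * C) ^ ((1:ℝ) / m) = x * C ^ ((1:ℝ) / m) := by
  rw [Real.mul_rpow (pow_nonneg hx m) hC, ← Real.rpow_natCast x m,
    ← Real.rpow_mul hx, mul_one_div, div_self (Nat.cast_ne_zero.mpr hm), Real.rpow_one]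

lemma stmt15_key (q : ℝ → ℝ) (a a₁ : ℝ) (ha : 0 < a) (ha₁ : a₁ < a)
    (hq : MemLp q 2 (volume.restrict (Set.Ioi 0)))
    (hsupp : ∀ r > a, q r = 0)
    (hpos : ∀ r ∈ Set.Ioc a₁ a, 0 ≤ q r)
    (hnontriv : ∀ ε > (0:ℝ), 0 < ∫ r in Set.Ioo (a - ε) a, |q r|) :
    Tendsto (fun m : ℕ => |∫ r in Set.Ioi (0:ℝ), q r * r ^ m| ^ ((1:ℝ) / m))
      atTop (nhds a) := by
  -- basic integrability
  haveI : IsFiniteMeasure (volume.restrict (Set.Ioc (0:ℝ) a)) :=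
    ⟨by simpa [Measure.restrict_apply_univ] using measure_Ioc_lt_top⟩
  have hq' : MemLp q 2 (volume.restrict (Set.Ioc 0 a)) :=
    hq.mono_measure (Measure.restrict_mono Set.Ioc_subset_Ioi_self le_rfl)
  have hInt : IntegrableOn q (Set.Ioc 0 a) :=
    memLp_one_iff_integrable.mp (hq'.mono_exponent one_le_two)
  have hqmeas : AEStronglyMeasurable q (volume.restrict (Set.Ioc 0 a)) :=
    hq'.aestronglyMeasurable
  set I : ℝ := ∫ r in Set.Ioc (0:ℝ) a, |q r| with hIdef
  have hIpos : 0 < I := by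
    have h0 := hnontriv a ha
    rw [sub_self] at h0
    have hmono : ∫ r in Set.Ioo (0:ℝ) a, |q r| ≤ ∫ r in Set.Ioc (0:ℝ) a, |q r| :=
      setIntegral_mono_set hInt.abs (Filter.Eventually.of_forall fun r => abs_nonneg _)
        (HasSubset.Subset.eventuallyLE Set.Ioo_subset_Ioc_self)
    linarith
  -- integrability of q r * r^m
  have hqm : ∀ m : ℕ, IntegrableOn (fun r => q r * r ^ m) (Set.Ioc 0 a) := by
    intro m
    refine Integrable.mono' (hInt.abs.mul_const (a ^ m))
      (hqmeas.mul ((continuous_pow m).aestronglyMeasurable)) ?_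
    filter_upwards [ae_restrict_mem measurableSet_Ioc] with r hr
    rw [Real.norm_eq_abs, abs_mul]
    rw [abs_of_nonneg (pow_nonneg hr.1.le m)]
    exact mul_le_mul_of_nonneg_left (pow_le_pow_left₀ hr.1.le hr.2 m) (abs_nonneg _)
  -- the integral over Ioi 0 equals the integral over Ioc 0 a
  have hJ : ∀ m : ℕ, (∫ r in Set.Ioi (0:ℝ), q r * r ^ m)
      = ∫ r in Set.Ioc (0:ℝ) a, q r * r ^ m := by
    intro m
    have hzero : ∀ r ∈ Set.Ioi a, q r * r ^ m = 0 := fun r hr => by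
      rw [hsupp r hr, zero_mul]
    have hInt2 : IntegrableOn (fun r => q r * r ^ m) (Set.Ioi a) := by
      refine (integrableOn_congr_fun (fun r hr => (hzero r hr).symm) measurableSet_Ioi).mp ?_
      exact integrableOn_zero
    have hu : Set.Ioc (0:ℝ) a ∪ Set.Ioi a = Set.Ioi 0 := Set.Ioc_union_Ioi_eq_Ioi ha.le
    rw [← hu, setIntegral_union (Set.Ioc_disjoint_Ioi le_rfl) measurableSet_Ioi (hqm m) hInt2,
      setIntegral_eq_zero_of_forall_eq_zero hzero, add_zero]
  -- general upper bound on pieces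
  have hub : ∀ b : ℝ, 0 ≤ b → b ≤ a → ∀ m : ℕ,
      |∫ r in Set.Ioc (0:ℝ) b, q r * r ^ m| ≤ b ^ m * I := by
    intro b hb0 hba m
    have hsub : Set.Ioc (0:ℝ) b ⊆ Set.Ioc (0:ℝ) a := Set.Ioc_subset_Ioc_right hba
    have h1 : |∫ r in Set.Ioc (0:ℝ) b, q r * r ^ m|
        ≤ ∫ r in Set.Ioc (0:ℝ) b, |q r * r ^ m| := by
      have h := norm_integral_le_integral_norm (μ := volume.restrict (Set.Ioc (0:ℝ) b))
        (fun r => q r * r ^ m)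
      simpa only [Real.norm_eq_abs] using h
    have h2 : ∫ r in Set.Ioc (0:ℝ) b, |q r * r ^ m|
        ≤ ∫ r in Set.Ioc (0:ℝ) b, |q r| * b ^ m := by
      refine setIntegral_mono_on ((hqm m).mono_set hsub).abs
        ((hInt.mono_set hsub).abs.mul_const _) measurableSet_Ioc ?_
      intro r hr
      rw [abs_mul, abs_of_nonneg (pow_nonneg hr.1.le m)]
      exact mul_le_mul_of_nonneg_left (pow_le_pow_left₀ hr.1.le hr.2 m) (abs_nonneg _)
    have h3 : ∫ r in Set.Ioc (0:ℝ) b, |q r| * b ^ m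
        = (∫ r in Set.Ioc (0:ℝ) b, |q r|) * b ^ m := integral_mul_const _ _
    have h4 : (∫ r in Set.Ioc (0:ℝ) b, |q r|) ≤ I :=
      setIntegral_mono_set hInt.abs (Filter.Eventually.of_forall fun r => abs_nonneg _)
        (HasSubset.Subset.eventuallyLE hsub)
    have h5 : (∫ r in Set.Ioc (0:ℝ) b, |q r|) * b ^ m ≤ I * b ^ m :=
      mul_le_mul_of_nonneg_right h4 (pow_nonneg hb0 m)
    calc |∫ r in Set.Ioc (0:ℝ) b, q r * r ^ m| ≤ _ := h1
      _ ≤ _ := h2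
      _ = _ := h3
      _ ≤ I * b ^ m := h5
      _ = b ^ m * I := mul_comm _ _
  -- main argument
  rw [Metric.tendsto_nhds]
  intro ε hε
  set t : ℝ := max (max a₁ 0) (a - ε) with htdef
  have hta : t < a := by
    rw [htdef]
    simp only [max_lt_iff]
    exact ⟨⟨ha₁, ha⟩, by linarith⟩
  set b₀ : ℝ := t + (a - t) / 3 with hb₀def
  set b₁ : ℝ := t + 2 * (a - t) / 3 with hb₁def
  have ht0 : 0 ≤ t := le_trans (le_max_right _ _) (le_max_left _ _)
  have hta₁ : a₁ ≤ t := le_trans (le_max_left _ _) (le_max_left _ _)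
  have htε : a - ε ≤ t := le_max_right _ _
  have hb₀pos : 0 < b₀ := by rw [hb₀def]; linarith
  have hb₀b₁ : b₀ < b₁ := by rw [hb₀def, hb₁def]; linarith
  have hb₁a : b₁ < a := by rw [hb₁def]; linarith
  have hb₀a : b₀ < a := hb₀b₁.trans hb₁a
  have hb₁pos : 0 < b₁ := lt_trans hb₀pos hb₀b₁
  have ha₁b₁ : a₁ < b₁ := lt_of_le_of_lt hta₁ (by rw [hb₁def]; linarith)
  have ha₁b₀ : a₁ < b₀ := lt_of_le_of_lt hta₁ (by rw [hb₀def]; linarith)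
  have hεb₁ : a - ε < b₁ := lt_of_le_of_lt htε (by rw [hb₁def]; linarith)
  -- c₁ and its positivity
  set c₁ : ℝ := ∫ r in Set.Ioc b₁ a, q r with hc₁def
  have hsub₁ : Set.Ioc b₁ a ⊆ Set.Ioc (0:ℝ) a := Set.Ioc_subset_Ioc_left hb₁pos.le
  have hc₁pos : 0 < c₁ := by
    have h0 := hnontriv (a - b₁) (by linarith)
    have heq : a - (a - b₁) = b₁ := by ring
    rw [heq] at h0
    have hmono : ∫ r in Set.Ioo b₁ a, |q r| ≤ ∫ r in Set.Ioc b₁ a, |q r| :=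
      setIntegral_mono_set (hInt.mono_set hsub₁).abs
        (Filter.Eventually.of_forall fun r => abs_nonneg _)
        (HasSubset.Subset.eventuallyLE Set.Ioo_subset_Ioc_self)
    have hcongr : ∫ r in Set.Ioc b₁ a, |q r| = ∫ r in Set.Ioc b₁ a, q r :=
      setIntegral_congr_fun measurableSet_Ioc fun r hr =>
        abs_of_nonneg (hpos r ⟨lt_trans ha₁b₁ hr.1, hr.2⟩)
    rw [hc₁def]; linarith
  -- eventually statements
  have hE1 : ∀ᶠ m : ℕ in atTop, 1 ≤ m := eventually_ge_atTop 1
  have hE2 : ∀ᶠ m : ℕ in atTop, a * I ^ ((1:ℝ) / m) < a + ε := by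
    have h := (stmt15_root_tendsto_one hIpos).const_mul a
    rw [mul_one] at h
    exact h.eventually_lt_const (by linarith)
  have hE3 : ∀ᶠ m : ℕ in atTop, a - ε < b₁ * (c₁ / 2) ^ ((1:ℝ) / m) := by
    have h := (stmt15_root_tendsto_one (half_pos hc₁pos)).const_mul b₁
    rw [mul_one] at h
    exact h.eventually_const_lt hεb₁
  have hE4 : ∀ᶠ m : ℕ in atTop, I * (b₀ / b₁) ^ m < c₁ / 2 := by
    have h := (tendsto_pow_atTop_nhds_zero_of_lt_one
      (div_nonneg hb₀pos.le hb₁pos.le) ((div_lt_one hb₁pos).mpr hb₀b₁)).const_mul I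
    rw [mul_zero] at h
    exact h.eventually_lt_const (half_pos hc₁pos)
  filter_upwards [hE1, hE2, hE3, hE4] with m hm1 hm2 hm3 hm4
  have hmne : m ≠ 0 := Nat.one_le_iff_ne_zero.mp hm1
  set Jm : ℝ := ∫ r in Set.Ioc (0:ℝ) a, q r * r ^ m with hJmdef
  have hJub : |Jm| ≤ a ^ m * I := hub a ha.le le_rfl m
  have hbm : (0:ℝ) < b₁ ^ m := pow_pos hb₁pos m
  -- splitting
  have hsplit : Jm = (∫ r in Set.Ioc (0:ℝ) b₀, q r * r ^ m)
      + ∫ r in Set.Ioc b₀ a, q r * r ^ m := by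
    rw [hJmdef, ← Set.Ioc_union_Ioc_eq_Ioc hb₀pos.le hb₀a.le,
      setIntegral_union (Set.Ioc_disjoint_Ioc_of_le le_rfl) measurableSet_Ioc
        ((hqm m).mono_set (Set.Ioc_subset_Ioc_right hb₀a.le))
        ((hqm m).mono_set (Set.Ioc_subset_Ioc_left hb₀pos.le))]
  have hA : |∫ r in Set.Ioc (0:ℝ) b₀, q r * r ^ m| ≤ b₀ ^ m * I := hub b₀ hb₀pos.le hb₀a.le m
  have hBsub : Set.Ioc b₀ a ⊆ Set.Ioc (0:ℝ) a := Set.Ioc_subset_Ioc_left hb₀pos.le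
  have hnn : 0 ≤ᵐ[volume.restrict (Set.Ioc b₀ a)] fun r => q r * r ^ m := by
    filter_upwards [ae_restrict_mem measurableSet_Ioc] with r hr
    exact mul_nonneg (hpos r ⟨lt_trans ha₁b₀ hr.1, hr.2⟩) (pow_nonneg (hb₀pos.trans hr.1).le m)
  have hB1 : ∫ r in Set.Ioc b₁ a, q r * r ^ m ≤ ∫ r in Set.Ioc b₀ a, q r * r ^ m :=
    setIntegral_mono_set ((hqm m).mono_set hBsub) hnn
      (HasSubset.Subset.eventuallyLE (Set.Ioc_subset_Ioc_left hb₀b₁.le))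
  have hB2 : b₁ ^ m * c₁ ≤ ∫ r in Set.Ioc b₁ a, q r * r ^ m := by
    have he : b₁ ^ m * c₁ = ∫ r in Set.Ioc b₁ a, q r * b₁ ^ m := by
      rw [integral_mul_const, hc₁def]; ring
    rw [he]
    refine setIntegral_mono_on ((hInt.mono_set hsub₁).mul_const _)
      ((hqm m).mono_set hsub₁) measurableSet_Ioc ?_
    intro r hr
    exact mul_le_mul_of_nonneg_left (pow_le_pow_left₀ hb₁pos.le hr.1.le m)
      (hpos r ⟨lt_trans ha₁b₁ hr.1, hr.2⟩)
  have h4' : b₀ ^ m * I < b₁ ^ m * (c₁ / 2) := by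
    have h := mul_lt_mul_of_pos_right hm4 hbm
    have e : I * (b₀ / b₁) ^ m * b₁ ^ m = b₀ ^ m * I := by
      rw [div_pow]
      field_simp
    calc b₀ ^ m * I = I * (b₀ / b₁) ^ m * b₁ ^ m := e.symm
      _ < c₁ / 2 * b₁ ^ m := h
      _ = b₁ ^ m * (c₁ / 2) := by ring
  have hJlb : b₁ ^ m * (c₁ / 2) ≤ Jm := by
    have hneg := neg_abs_le (∫ r in Set.Ioc (0:ℝ) b₀, q r * r ^ m)
    have hBB : b₁ ^ m * c₁ ≤ ∫ r in Set.Ioc b₀ a, q r * r ^ m := le_trans hB2 hB1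
    rw [hsplit]
    linarith
  have hfu : |Jm| ^ ((1:ℝ)/m) ≤ a * I ^ ((1:ℝ)/m) := by
    rw [← stmt15_root_pow_mul ha.le hIpos.le hmne]
    exact Real.rpow_le_rpow (abs_nonneg _) hJub (by positivity)
  have hfl : b₁ * (c₁/2) ^ ((1:ℝ)/m) ≤ |Jm| ^ ((1:ℝ)/m) := by
    rw [← stmt15_root_pow_mul hb₁pos.le (half_pos hc₁pos).le hmne]
    exact Real.rpow_le_rpow (by positivity) (le_trans hJlb (le_abs_self _)) (by positivity)
  rw [hJ m, ← hJmdef, Real.dist_eq, abs_sub_lt_iff]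
  constructor
  · linarith
  · linarith

/-- If `q ∈ L²(0,∞)` is real-valued, vanishes for `r > a` (where `a > 0` is the
radius of its support), does not change sign on some interval `(a₁, a]`, and is not
a.e. zero on `(a−ε, a)` for any `ε > 0`, then
`a = lim_{m→∞} |∫₀^∞ q(r) rᵐ dr|^{1/m}`. -/
theorem stmt_15 (q : ℝ → ℝ) (a : ℝ) (ha : 0 < a)
    (hq : MemLp q 2 (volume.restrict (Set.Ioi 0)))
    (hsupp : ∀ r > a, q r = 0)
    (hsign : ∃ a₁ < a, (∀ r ∈ Set.Ioc a₁ a, 0 ≤ q r) ∨ (∀ r ∈ Set.Ioc a₁ a, q r ≤ 0))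
    (hnontriv : ∀ ε > (0:ℝ), 0 < ∫ r in Set.Ioo (a - ε) a, |q r|) :
    Tendsto (fun m : ℕ => |∫ r in Set.Ioi (0:ℝ), q r * r ^ m| ^ ((1:ℝ) / m))
      atTop (nhds a) := by
  obtain ⟨a₁, ha₁, hcase⟩ := hsign
  rcases hcase with hp | hn
  · exact stmt15_key q a a₁ ha ha₁ hq hsupp hp hnontriv
  · have h := stmt15_key (fun r => -q r) a a₁ ha ha₁ hq.neg
      (fun r hr => by simp [hsupp r hr])
      (fun r hr => by simpa using hn r hr)
      (fun ε hε => by simpa using hnontriv ε hε)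
    refine h.congr fun m => ?_
    congr 1
    simp only [neg_mul, integral_neg, abs_neg]
end
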